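/- (Unit-modulus column sums after CP-DFT combining.) Let N be a positive integer and a ∈ ℂ^N a unit-modulus vector. Then for all n, n' ∈ {0,…,N−1}, aᴴ · U_n^* · U_{n'}ᵀ · a = N if n = n' and 0 otherwise; equivalently, the quadratic form of (U_n U_{n'}ᴴ)^* at any unit-modulus vector equals N·δ_{n,n'}. -/

import Mathlib

open Matrix Complex Finset

/-- The normalized `N × N` DFT matrix: `U i j = ω^(i*j) / √N` with `ω = exp(2πi/N)`. -/
noncomputable def dftU (N : ℕ) : Matrix (Fin N) (Fin N) ℂ :=
  fun i j => Complex.exp (2 * Real.pi * Complex.I / (N : ℂ)) ^ (i.val * j.val) / (Real.sqrt N : ℂ)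

/-- The `n`-th circulant-permutation DFT (CP-DFT) matrix:
`U_n i j = U i ((j + n) mod N)`, where addition in `Fin N` is modulo `N`. -/
noncomputable def cpdft (N : ℕ) (n : Fin N) : Matrix (Fin N) (Fin N) ℂ :=
  fun i j => dftU N i (j + n)


section Aux

lemma pow_mod_of_pow_eq_one {ω : ℂ} {N : ℕ} (hω : ω ^ N = 1) (a : ℕ) :
    ω ^ a = ω ^ (a % N) := by
  conv_lhs => rw [← Nat.div_add_mod a N]
  rw [pow_add, pow_mul, hω, one_pow, one_mul]

lemma pow_congr_of_pow_eq_one {ω : ℂ} {N : ℕ} (hω : ω ^ N = 1) {a b : ℕ}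
    (h : a ≡ b [MOD N]) : ω ^ a = ω ^ b := by
  rw [pow_mod_of_pow_eq_one hω a, pow_mod_of_pow_eq_one hω b, h]

lemma fin_dvd_sub_iff {N : ℕ} (i j : Fin N) :
    (N : ℤ) ∣ ((j.val : ℤ) - (i.val : ℤ)) ↔ i = j := by
  constructor
  · intro hdvd
    have habs : |(j.val : ℤ) - (i.val : ℤ)| < (N : ℤ) := by
      rw [abs_sub_lt_iff]
      have := j.isLt; have := i.isLt
      omega
    have h0 := Int.eq_zero_of_abs_lt_dvd hdvd habs
    have : i.val = j.val := by omega
    exact Fin.ext this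
  · rintro rfl; simp

lemma geom_sum_root {N : ℕ} (hN : 0 < N) {ζ : ℂ} (hζ : IsPrimitiveRoot ζ N) (m : ℤ) :
    ∑ k : Fin N, (ζ ^ m) ^ (k : ℕ) = if (N : ℤ) ∣ m then (N : ℂ) else 0 := by
  rw [Fin.sum_univ_eq_sum_range (fun k => (ζ ^ m) ^ k)]
  by_cases h : (N : ℤ) ∣ m
  · rw [if_pos h]
    have h1 : ζ ^ m = 1 := (hζ.zpow_eq_one_iff_dvd m).mpr h
    simp [h1]
  · rw [if_neg h]
    have hx : ζ ^ m ≠ 1 := fun hc => h ((hζ.zpow_eq_one_iff_dvd m).mp hc)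
    rw [geom_sum_eq hx]
    have hN1 : (ζ ^ m) ^ N = 1 := by
      rw [← zpow_natCast (ζ ^ m) N, ← _root_.zpow_mul, mul_comm, _root_.zpow_mul, zpow_natCast,
        hζ.pow_eq_one, _root_.one_zpow]
    simp [hN1]

lemma geom_sum_root' {N : ℕ} (hN : 0 < N) {ζ : ℂ} (hζ : IsPrimitiveRoot ζ N)
    (hζ0 : ζ ≠ 0) (m : ℤ) :
    ∑ k : Fin N, ζ ^ (m * (k.val : ℤ)) = if (N : ℤ) ∣ m then (N : ℂ) else 0 := by
  rw [← geom_sum_root hN hζ m]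
  refine Finset.sum_congr rfl (fun k _ => ?_)
  rw [← zpow_natCast (ζ ^ m) k.val, ← _root_.zpow_mul]

end Aux


/-- unit-modulus column sums after CP-DFT combining: for a unit-modulus
vector `a`, the quadratic form of `(U_n U_{n'}ᴴ)^* = U_n^* U_{n'}ᵀ` at `a` equals `N·δ_{n,n'}`:
`aᴴ · U_n^* · U_{n'}ᵀ · a = N` if `n = n'`, and `0` otherwise
(with `X^* = (Xᴴ)ᵀ` the entrywise conjugate). -/
theorem cpdft_quadform_delta (N : ℕ) (hN : 0 < N) (a : Fin N → ℂ)
    (ha : ∀ i, ‖a i‖ = 1) (n n' : Fin N) :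
    star a ⬝ᵥ ((((cpdft N n)ᴴ)ᵀ * (cpdft N n')ᵀ).mulVec a) =
      if n = n' then (N : ℂ) else 0 := by
  set ω : ℂ := Complex.exp (2 * Real.pi * Complex.I / (N : ℂ)) with hωdef
  have hprim : IsPrimitiveRoot ω N := Complex.isPrimitiveRoot_exp N hN.ne'
  have hωN : ω ^ N = 1 := hprim.pow_eq_one
  have hω0 : ω ≠ 0 := hprim.ne_zero hN.ne'
  have hconj : (starRingEnd ℂ) ω = ω⁻¹ := by
    rw [hωdef, ← Complex.exp_conj, ← Complex.exp_neg]
    congr 1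
    simp [map_div₀, _root_.map_mul, map_ofNat, Complex.conj_I, Complex.conj_ofReal, map_natCast]
    ring
  have hsqrtN : (Real.sqrt N : ℂ) * (Real.sqrt N : ℂ) = (N : ℂ) := by
    rw [← Complex.ofReal_mul, Real.mul_self_sqrt (Nat.cast_nonneg N)]
    simp
  have hNne : (N : ℂ) ≠ 0 := Nat.cast_ne_zero.mpr hN.ne'
  have hval : ∀ (k m i : Fin N),
      ω ^ (i.val * ((k + m : Fin N)).val) = ω ^ (i.val * (k.val + m.val)) := by
    intro k m i
    apply pow_congr_of_pow_eq_one hωN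
    rw [Fin.add_def]
    exact Nat.ModEq.mul_left i.val (Nat.mod_modEq _ N)
  have hM : ∀ i j : Fin N, ((((cpdft N n)ᴴ)ᵀ * (cpdft N n')ᵀ)) i j =
      if i = j then ω ^ ((i.val : ℤ) * ((n'.val : ℤ) - (n.val : ℤ))) else 0 := by
    intro i j
    have key : ∀ k : Fin N, (((cpdft N n)ᴴ)ᵀ) i k * ((cpdft N n')ᵀ) k j =
        (ω ^ (((j.val : ℤ) - (i.val : ℤ)) * (k.val : ℤ)) *
          ω ^ ((j.val : ℤ) * (n'.val : ℤ) - (i.val : ℤ) * (n.val : ℤ))) / (N : ℂ) := by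
      intro k
      simp only [Matrix.transpose_apply, Matrix.conjTranspose_apply, cpdft, dftU]
      rw [hval k n i, hval k n' j]
      rw [star_div₀, star_pow]
      have hstar : star ω = ω⁻¹ := hconj
      rw [hstar]
      have hrs : star ((Real.sqrt N : ℝ) : ℂ) = ((Real.sqrt N : ℝ) : ℂ) := by
        simp [Complex.star_def, Complex.conj_ofReal]
      rw [hrs, div_mul_div_comm, hsqrtN]
      congr 1
      rw [inv_pow, ← zpow_natCast ω (i.val * (k.val + n.val)),
        ← zpow_natCast ω (j.val * (k.val + n'.val)), ← _root_.zpow_neg, ← zpow_add₀ hω0,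
        ← zpow_add₀ hω0]
      congr 1
      push_cast
      ring
    rw [Matrix.mul_apply, Finset.sum_congr rfl (fun k _ => key k),
      ← Finset.sum_div, ← Finset.sum_mul, geom_sum_root' hN hprim hω0]
    rw [if_congr (fin_dvd_sub_iff i j) rfl rfl]
    by_cases hij : i = j
    · subst hij
      rw [if_pos rfl, if_pos rfl, mul_comm, mul_div_assoc, div_self hNne, mul_one]
      congr 1
      ring
    · rw [if_neg hij, if_neg hij, zero_mul, zero_div]
  have hlhs : star a ⬝ᵥ ((((cpdft N n)ᴴ)ᵀ * (cpdft N n')ᵀ).mulVec a) =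
      ∑ i : Fin N, ω ^ (((n'.val : ℤ) - (n.val : ℤ)) * (i.val : ℤ)) := by
    simp only [dotProduct, Matrix.mulVec, dotProduct, Pi.star_apply]
    refine Finset.sum_congr rfl (fun i _ => ?_)
    rw [Finset.sum_congr rfl (fun j _ => by rw [hM i j])]
    simp only [ite_mul, zero_mul]
    rw [Finset.sum_ite_eq Finset.univ i (fun j => ω ^ ((i.val : ℤ) * ((n'.val : ℤ) - (n.val : ℤ))) * a j),
      if_pos (Finset.mem_univ i)]
    have h1 : star (a i) * a i = 1 := by
      rw [Complex.star_def, ← Complex.normSq_eq_conj_mul_self, Complex.normSq_eq_norm_sq, ha, one_pow, Complex.ofReal_one]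
    calc star (a i) * (ω ^ ((i.val : ℤ) * ((n'.val : ℤ) - (n.val : ℤ))) * a i)
        = (star (a i) * a i) * ω ^ ((i.val : ℤ) * ((n'.val : ℤ) - (n.val : ℤ))) := by ring
      _ = ω ^ (((n'.val : ℤ) - (n.val : ℤ)) * (i.val : ℤ)) := by rw [h1, one_mul, mul_comm]
  rw [hlhs, geom_sum_root' hN hprim hω0, if_congr (fin_dvd_sub_iff n n') rfl rfl]
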